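/- With the setup of a direct system over a join-semilattice I with pairwise disjoint nonempty carriers A_i and A_i⁺ = ⋃_{j ≤ i} A_j: for any finite collection i₁, …, i_n ∈ I (n ≥ 2), if A_{i₁}⁺ ∩ … ∩ A_{i_n}⁺ ≠ ∅ and I is such that every element has only finitely many elements below it, then there exists i ∈ I with A_i⁺ = A_{i₁}⁺ ∩ … ∩ A_{i_n}⁺. -/
import Mathlib


/-- for pairwise disjoint nonempty carriers over a join-semilattice
in which every element has finitely many elements below it, any nonempty finite
intersection of sets `A_{i_k}⁺ = ⋃_{j ≤ i_k} A_j` (n ≥ 2) is again of the form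
`A_i⁺` for some `i`. -/
theorem stmt_11 {I α : Type*} [SemilatticeSup I] (Ai : I → Set α)
    (hne : ∀ i, (Ai i).Nonempty)
    (hdisj : ∀ i j, i ≠ j → Ai i ∩ Ai j = ∅)
    (hfin : ∀ i : I, {j : I | j ≤ i}.Finite)
    (n : ℕ) (hn : 2 ≤ n) (f : Fin n → I)
    (hinter : (⋂ k : Fin n, ⋃ j, ⋃ (_ : j ≤ f k), Ai j).Nonempty) :
    ∃ i : I, (⋃ j, ⋃ (_ : j ≤ i), Ai j) = ⋂ k : Fin n, ⋃ j, ⋃ (_ : j ≤ f k), Ai j := by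
  have hn0 : 0 < n := by omega
  set k0 : Fin n := ⟨0, hn0⟩ with hk0
  -- uniqueness of the index containing a point
  have huniq : ∀ (x : α) (j j' : I), x ∈ Ai j → x ∈ Ai j' → j = j' := by
    intro x j j' hj hj'
    by_contra h
    have := hdisj j j' h
    have : x ∈ Ai j ∩ Ai j' := ⟨hj, hj'⟩
    simp_all
  set S : Set I := {j | ∀ k : Fin n, j ≤ f k} with hSdef
  have hSfin : S.Finite := (hfin (f k0)).subset (fun j hj => hj k0)
  -- S is nonempty
  obtain ⟨x, hx⟩ := hinter
  simp only [Set.mem_iInter, Set.mem_iUnion] at hx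
  obtain ⟨j0, hj0le, hj0x⟩ := hx k0
  have hj0S : j0 ∈ S := by
    intro k
    obtain ⟨j', hj'le, hj'x⟩ := hx k
    rwa [huniq x j0 j' hj0x hj'x]
  have hSne : hSfin.toFinset.Nonempty := ⟨j0, hSfin.mem_toFinset.mpr hj0S⟩
  set i : I := hSfin.toFinset.sup' hSne id with hi
  have hiS : i ∈ S := by
    intro k
    apply Finset.sup'_le
    intro j hj
    exact (hSfin.mem_toFinset.mp hj) k
  refine ⟨i, ?_⟩
  ext y
  simp only [Set.mem_iInter, Set.mem_iUnion]
  constructor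
  · rintro ⟨j, hjle, hjy⟩ k
    exact ⟨j, le_trans hjle (hiS k), hjy⟩
  · intro hy
    obtain ⟨j, hjle, hjy⟩ := hy k0
    have hjS : j ∈ S := by
      intro k
      obtain ⟨j', hj'le, hj'y⟩ := hy k
      rwa [huniq y j j' hjy hj'y]
    exact ⟨j, Finset.le_sup' id (hSfin.mem_toFinset.mpr hjS), hjy⟩
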